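/- (Gagliardo's inequality) For nonnegative measurable functions f_1, …, f_d on ℝ^{d−1} with f_j ∈ L^{d−1}(ℝ^{d−1}), the function f(y) = ∏_{j=1}^d f_j(ŷ_j) (where ŷ_j ∈ ℝ^{d−1} omits the j-th coordinate of y ∈ ℝ^d) is integrable on ℝ^d and ∫_{ℝ^d} f(y) dy ≤ ∏_{j=1}^d ‖f_j‖_{L^{d−1}(ℝ^{d−1})}. -/

import Mathlib

open MeasureTheory BigOperators
open scoped ENNReal

-- measurable snoc
lemma measurable_snoc' (m : ℕ) :
    Measurable (fun p : (Fin (m + 1) → ℝ) × ℝ => (Fin.snoc p.1 p.2 : Fin (m + 2) → ℝ)) := by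
  have : (fun p : (Fin (m + 1) → ℝ) × ℝ => (Fin.snoc p.1 p.2 : Fin (m + 2) → ℝ)) =
      fun p => (MeasurableEquiv.piFinSuccAbove (fun _ : Fin (m + 2) => ℝ) (Fin.last (m + 1))).symm
        (p.2, p.1) := by
    funext p
    simp [MeasurableEquiv.piFinSuccAbove, Fin.insertNth_last', Fin.snocEquiv]
  rw [this]
  exact (MeasurableEquiv.measurable _).comp (measurable_snd.prodMk measurable_fst)

lemma lintegral_snoc' (m : ℕ) (F : (Fin (m + 2) → ℝ) → ℝ≥0∞) (hF : Measurable F) :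
    ∫⁻ y : Fin (m + 2) → ℝ, F y = ∫⁻ x : Fin (m + 1) → ℝ, ∫⁻ t : ℝ, F (Fin.snoc x t) := by
  have A := (measurePreserving_piFinSuccAbove (fun _ : Fin (m + 2) => (volume : Measure ℝ))
    (Fin.last (m + 1))).symm
  rw [show (volume : Measure (Fin (m+2) → ℝ)) = Measure.pi fun _ => volume from rfl]
  rw [← A.lintegral_comp hF]
  rw [lintegral_prod_symm (fun a => F ((MeasurableEquiv.piFinSuccAbove (fun _ : Fin (m+2) => ℝ) (Fin.last (m+1))).symm a)) ((hF.comp (MeasurableEquiv.measurable _)).aemeasurable)]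
  congr 1
  funext x
  congr 1
  funext t
  congr 1
  simp [MeasurableEquiv.piFinSuccAbove, Fin.insertNth_last', Fin.snocEquiv]

lemma snoc_comp_succAbove_last (m : ℕ) (x : Fin (m + 1) → ℝ) (t : ℝ) :
    (fun i : Fin (m + 1) => (Fin.snoc x t : Fin (m + 2) → ℝ) ((Fin.last (m + 1)).succAbove i)) =
      x := by
  funext i
  rw [Fin.succAbove_last, Fin.snoc_castSucc]

lemma snoc_comp_succAbove_castSucc (m : ℕ) (k : Fin (m + 1)) (x : Fin (m + 1) → ℝ) (t : ℝ) :
    (fun i : Fin (m + 1) => (Fin.snoc x t : Fin (m + 2) → ℝ) ((Fin.castSucc k).succAbove i)) =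
      Fin.snoc (fun i' : Fin m => x (k.succAbove i')) t := by
  funext i
  cases i using Fin.lastCases with
  | last =>
    rw [Fin.succAbove_castSucc_of_le _ _ (Fin.le_last k), Fin.succ_last, Fin.snoc_last,
      Fin.snoc_last]
  | cast i' =>
    rw [Fin.castSucc_succAbove_castSucc, Fin.snoc_castSucc, Fin.snoc_castSucc]

theorem LW (n : ℕ) : ∀ (g : Fin (n + 2) → (Fin (n + 1) → ℝ) → ℝ≥0∞),
    (∀ j, Measurable (g j)) →
    ∫⁻ y : Fin (n + 2) → ℝ, ∏ j, g j (fun i => y (j.succAbove i)) ≤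
      ∏ j, (∫⁻ x : Fin (n + 1) → ℝ, g j x ^ (n + 1 : ℝ)) ^ (n + 1 : ℝ)⁻¹ := by
  induction n with
  | zero =>
    intro g hg
    have hprod : Measurable fun y : Fin 2 → ℝ => ∏ j, g j (fun i => y (j.succAbove i)) :=
      Finset.measurable_prod _ fun j _ =>
        (hg j).comp (measurable_pi_lambda _ fun i => measurable_pi_apply _)
    rw [lintegral_snoc' 0 _ hprod]
    simp only [Nat.cast_zero, zero_add, ENNReal.rpow_one, inv_one]
    have key : ∀ (x : Fin 1 → ℝ) (t : ℝ),
        (∏ j : Fin 2, g j (fun i => (Fin.snoc x t : Fin 2 → ℝ) (j.succAbove i))) =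
          g 0 (fun _ => t) * g 1 x := by
      intro x t
      rw [Fin.prod_univ_two]
      have e0 : (fun i : Fin 1 => (Fin.snoc x t : Fin 2 → ℝ) ((0 : Fin 2).succAbove i)) =
          fun _ => t := by
        funext i
        rw [Subsingleton.elim i 0]
        show (Fin.snoc x t : Fin 2 → ℝ) (Fin.last 1) = t
        rw [Fin.snoc_last]
      have e1 : (fun i : Fin 1 => (Fin.snoc x t : Fin 2 → ℝ) ((1 : Fin 2).succAbove i)) = x := by
        funext i
        rw [Subsingleton.elim i 0]
        show (Fin.snoc x t : Fin 2 → ℝ) (Fin.castSucc 0) = x 0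
        rw [Fin.snoc_castSucc]
      rw [e0, e1]
    simp_rw [key]
    have hG0 : Measurable fun t : ℝ => g 0 (fun _ => t) :=
      (hg 0).comp (measurable_pi_lambda _ fun _ => measurable_id)
    have c0 : ∫⁻ t : ℝ, g 0 (fun _ => t) = ∫⁻ z : Fin 1 → ℝ, g 0 z := by
      have := ((volume_preserving_funUnique (Fin 1) ℝ).symm).lintegral_comp (hg 0)
      exact this
    rw [Fin.prod_univ_two]
    refine le_of_eq ?_
    calc ∫⁻ x : Fin 1 → ℝ, ∫⁻ t : ℝ, g 0 (fun _ => t) * g 1 x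
        = ∫⁻ x : Fin 1 → ℝ, (∫⁻ t : ℝ, g 0 (fun _ => t)) * g 1 x := by
          refine lintegral_congr fun x => ?_
          rw [lintegral_mul_const _ hG0]
      _ = (∫⁻ t : ℝ, g 0 (fun _ => t)) * ∫⁻ x : Fin 1 → ℝ, g 1 x :=
          lintegral_const_mul _ (hg 1)
      _ = (∫⁻ x : Fin 1 → ℝ, g 0 x) * ∫⁻ x : Fin 1 → ℝ, g 1 x := by rw [c0]
  | succ m ih =>
    intro g hg
    have hprod : Measurable fun y : Fin (m + 3) → ℝ => ∏ j, g j (fun i => y (j.succAbove i)) :=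
      Finset.measurable_prod _ fun j _ =>
        (hg j).comp (measurable_pi_lambda _ fun i => measurable_pi_apply _)
    rw [lintegral_snoc' (m + 1) _ hprod]
    set r : ℝ := (m : ℝ) + 1 with hrdef
    have hr0 : 0 < r := by rw [hrdef]; positivity
    have hp' : ((m + 1 : ℕ) : ℝ) + 1 = r + 1 := by rw [hrdef]; push_cast; ring
    rw [hp']
    set p : ℝ := r + 1 with hpdef
    have hp0 : 0 < p := by rw [hpdef]; positivity
    have hp1 : 1 < p := by rw [hpdef]; linarith
    have hpr : p - 1 = r := by rw [hpdef]; ring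
    have key : ∀ (x : Fin (m + 2) → ℝ) (t : ℝ),
        (∏ j, g j (fun i => (Fin.snoc x t : Fin (m + 3) → ℝ) (j.succAbove i))) =
          g (Fin.last (m + 2)) x *
            ∏ k : Fin (m + 2), g k.castSucc (Fin.snoc (fun i => x (k.succAbove i)) t) := by
      intro x t
      rw [Fin.prod_univ_castSucc, mul_comm]
      congr 1
      · rw [snoc_comp_succAbove_last]
      · exact Finset.prod_congr rfl fun k _ => by rw [snoc_comp_succAbove_castSucc]
    simp_rw [key]
    have hsnoc := measurable_snoc' m
    have hGmeas : ∀ (k : Fin (m + 2)) (z : Fin (m + 1) → ℝ),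
        Measurable fun t : ℝ => g k.castSucc (Fin.snoc z t) := fun k z =>
      (hg k.castSucc).comp (hsnoc.comp (measurable_const.prodMk measurable_id))
    set H : Fin (m + 2) → (Fin (m + 1) → ℝ) → ℝ≥0∞ :=
      fun k z => ∫⁻ t : ℝ, g k.castSucc (Fin.snoc z t) ^ p with hHdef
    have hHmeas : ∀ k, Measurable (H k) := fun k =>
      Measurable.lintegral_prod_right (((hg k.castSucc).comp hsnoc).pow_const p)
    have inner : ∀ x : Fin (m + 2) → ℝ,
        (∫⁻ t : ℝ, ∏ k : Fin (m + 2), g k.castSucc (Fin.snoc (fun i => x (k.succAbove i)) t)) ≤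
          ∏ k : Fin (m + 2), H k (fun i => x (k.succAbove i)) ^ p⁻¹ := by
      intro x
      have h1 : ∀ t : ℝ,
          (∏ k : Fin (m + 2), g k.castSucc (Fin.snoc (fun i => x (k.succAbove i)) t)) =
            ∏ k : Fin (m + 2),
              (g k.castSucc (Fin.snoc (fun i => x (k.succAbove i)) t) ^ p) ^ p⁻¹ := by
        intro t
        refine Finset.prod_congr rfl fun k _ => ?_
        rw [← ENNReal.rpow_mul, mul_inv_cancel₀ hp0.ne', ENNReal.rpow_one]
      simp_rw [h1]
      refine ENNReal.lintegral_prod_norm_pow_le (μ := (volume : Measure ℝ)) Finset.univ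
        (f := fun k t => g k.castSucc (Fin.snoc (fun i => x (k.succAbove i)) t) ^ p)
        (fun k _ => ((hGmeas k _).pow_const p).aemeasurable)
        (p := fun _ => p⁻¹) ?_ (fun _ _ => by positivity)
      rw [Finset.sum_const, Finset.card_univ, Fintype.card_fin, nsmul_eq_mul, hpdef, hrdef]
      push_cast
      field_simp
      ring
    have step1 : ∫⁻ x : Fin (m + 2) → ℝ, ∫⁻ t : ℝ,
          g (Fin.last (m + 2)) x *
            ∏ k : Fin (m + 2), g k.castSucc (Fin.snoc (fun i => x (k.succAbove i)) t) ≤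
        ∫⁻ x : Fin (m + 2) → ℝ, g (Fin.last (m + 2)) x *
          ∏ k : Fin (m + 2), H k (fun i => x (k.succAbove i)) ^ p⁻¹ := by
      refine lintegral_mono fun x => ?_
      rw [lintegral_const_mul _ (Finset.measurable_prod _ fun k _ => hGmeas k _)]
      exact mul_le_mul_right (inner x) _
    refine le_trans step1 ?_
    have hmeasΦ : Measurable fun x : Fin (m + 2) → ℝ =>
        ∏ k : Fin (m + 2), H k (fun i => x (k.succAbove i)) ^ p⁻¹ :=
      Finset.measurable_prod _ fun k _ =>
        ((hHmeas k).comp (measurable_pi_lambda _ fun i => measurable_pi_apply _)).pow_const _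
    have hpq : Real.HolderConjugate p (p / (p - 1)) := Real.holderConjugate_iff.mpr ⟨hp1, by
      rw [hpr, hpdef]
      field_simp
      ring⟩
    have holder := ENNReal.lintegral_mul_le_Lp_mul_Lq (volume : Measure (Fin (m + 2) → ℝ)) hpq
      (hg (Fin.last (m + 2))).aemeasurable hmeasΦ.aemeasurable
    refine le_trans holder ?_
    -- bound the second factor
    have hΦpow : ∀ x : Fin (m + 2) → ℝ,
        (∏ k : Fin (m + 2), H k (fun i => x (k.succAbove i)) ^ p⁻¹) ^ (p / (p - 1)) =
          ∏ k : Fin (m + 2), (fun z => H k z ^ r⁻¹) (fun i => x (k.succAbove i)) := by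
      intro x
      rw [← ENNReal.prod_rpow_of_nonneg
        (div_nonneg hp0.le (hpr ▸ hr0.le) : (0 : ℝ) ≤ p / (p - 1))]
      refine Finset.prod_congr rfl fun k _ => ?_
      rw [← ENNReal.rpow_mul]
      show _ = H k (fun i => x (k.succAbove i)) ^ r⁻¹
      congr 1
      rw [hpr]
      field_simp
    have ihapp := ih (fun k z => H k z ^ r⁻¹) (fun k => (hHmeas k).pow_const _)
    have ih2 : ∫⁻ x : Fin (m + 2) → ℝ,
        (∏ k : Fin (m + 2), H k (fun i => x (k.succAbove i)) ^ p⁻¹) ^ (p / (p - 1)) ≤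
        ∏ k : Fin (m + 2), (∫⁻ z : Fin (m + 1) → ℝ, H k z) ^ r⁻¹ := by
      calc ∫⁻ x : Fin (m + 2) → ℝ,
            (∏ k : Fin (m + 2), H k (fun i => x (k.succAbove i)) ^ p⁻¹) ^ (p / (p - 1))
          = ∫⁻ x : Fin (m + 2) → ℝ,
            ∏ k : Fin (m + 2), (fun z => H k z ^ r⁻¹) (fun i => x (k.succAbove i)) :=
            lintegral_congr hΦpow
        _ ≤ ∏ k : Fin (m + 2), (∫⁻ z : Fin (m + 1) → ℝ, (H k z ^ r⁻¹) ^ r) ^ r⁻¹ := ihapp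
        _ = ∏ k : Fin (m + 2), (∫⁻ z : Fin (m + 1) → ℝ, H k z) ^ r⁻¹ := by
            refine Finset.prod_congr rfl fun k _ => ?_
            congr 1
            refine lintegral_congr fun z => ?_
            rw [← ENNReal.rpow_mul, inv_mul_cancel₀ hr0.ne', ENNReal.rpow_one]
    have hHint : ∀ k : Fin (m + 2),
        (∫⁻ z : Fin (m + 1) → ℝ, H k z) = ∫⁻ y : Fin (m + 2) → ℝ, g k.castSucc y ^ p :=
      fun k => (lintegral_snoc' m _ ((hg k.castSucc).pow_const p)).symm
    calc (∫⁻ x : Fin (m + 2) → ℝ, g (Fin.last (m + 2)) x ^ p) ^ (1 / p) *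
          (∫⁻ x : Fin (m + 2) → ℝ,
            (∏ k : Fin (m + 2), H k (fun i => x (k.succAbove i)) ^ p⁻¹) ^ (p / (p - 1))) ^
            (1 / (p / (p - 1)))
        ≤ (∫⁻ x : Fin (m + 2) → ℝ, g (Fin.last (m + 2)) x ^ p) ^ (1 / p) *
          (∏ k : Fin (m + 2), (∫⁻ y : Fin (m + 2) → ℝ, g k.castSucc y ^ p) ^ r⁻¹) ^
            (1 / (p / (p - 1))) := by
          refine mul_le_mul_right
            (ENNReal.rpow_le_rpow ?_
              (one_div_nonneg.mpr (div_nonneg hp0.le (hpr ▸ hr0.le)))) _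
          simp_rw [hHint] at ih2
          exact ih2
      _ = (∫⁻ x : Fin (m + 2) → ℝ, g (Fin.last (m + 2)) x ^ p) ^ p⁻¹ *
          ∏ k : Fin (m + 2), (∫⁻ y : Fin (m + 2) → ℝ, g k.castSucc y ^ p) ^ p⁻¹ := by
          rw [one_div]
          congr 1
          rw [one_div, ← ENNReal.prod_rpow_of_nonneg
            (inv_nonneg.mpr (div_nonneg hp0.le (hpr ▸ hr0.le)) : (0 : ℝ) ≤ (p / (p - 1))⁻¹)]
          refine Finset.prod_congr rfl fun k _ => ?_
          rw [← ENNReal.rpow_mul]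
          congr 1
          rw [hpr]
          field_simp
      _ = ∏ j : Fin (m + 3), (∫⁻ x : Fin (m + 2) → ℝ, g j x ^ p) ^ p⁻¹ := by
          conv_rhs => rw [Fin.prod_univ_castSucc]
          rw [mul_comm]


/-- Gagliardo's inequality: if `f_j ∈ L^{d-1}(ℝ^{d-1})` are nonnegative
(`d = e+1 ≥ 2`), then `y ↦ ∏_j f_j(ŷ_j)` is integrable on `ℝ^d` and its integral
is at most `∏_j ‖f_j‖_{L^{d-1}}`. -/
theorem gagliardo (e : ℕ) (he : 1 ≤ e) (f : Fin (e + 1) → (Fin e → ℝ) → ℝ)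
    (hmeas : ∀ j, Measurable (f j)) (hpos : ∀ j x, 0 ≤ f j x)
    (hLp : ∀ j, MemLp (f j) (e : ℝ≥0∞) volume) :
    Integrable (fun y : Fin (e + 1) → ℝ =>
      ∏ j, f j (fun i => y (j.succAbove i))) volume ∧
    ∫ y : Fin (e + 1) → ℝ, ∏ j, f j (fun i => y (j.succAbove i)) ≤
      ∏ j, (eLpNorm (f j) (e : ℝ≥0∞) volume).toReal := by
  obtain ⟨n, rfl⟩ : ∃ n, e = n + 1 := ⟨e - 1, by omega⟩
  set g : Fin (n + 2) → (Fin (n + 1) → ℝ) → ℝ≥0∞ :=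
    fun j z => ENNReal.ofReal (f j z) with hgdef
  have hgm : ∀ j, Measurable (g j) := fun j => (hmeas j).ennreal_ofReal
  have hlw := LW n g hgm
  -- identify the right-hand side with the product of eLpNorms
  have hexp : ((n : ℝ) + 1) = (((n + 1 : ℕ) : ℝ≥0∞)).toReal := by
    rw [ENNReal.toReal_natCast]
    push_cast
    ring
  have hrhs : ∀ j, (∫⁻ x : Fin (n + 1) → ℝ, g j x ^ ((n : ℝ) + 1)) ^ ((n : ℝ) + 1)⁻¹ =
      eLpNorm (f j) ((n + 1 : ℕ) : ℝ≥0∞) volume := by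
    intro j
    rw [eLpNorm_eq_lintegral_rpow_enorm_toReal (by exact_mod_cast Nat.succ_ne_zero n)
      (ENNReal.natCast_ne_top _), ← hexp, one_div]
    congr 1
    refine lintegral_congr fun x => ?_
    congr 1
    exact (Real.enorm_eq_ofReal (hpos j x)).symm
  simp_rw [hrhs] at hlw
  have hofReal : ∀ y : Fin (n + 2) → ℝ,
      ENNReal.ofReal (∏ j, f j (fun i => y (j.succAbove i))) =
        ∏ j, g j (fun i => y (j.succAbove i)) :=
    fun y => ENNReal.ofReal_prod_of_nonneg fun j _ => hpos j _
  have hfin : (∏ j, eLpNorm (f j) ((n + 1 : ℕ) : ℝ≥0∞) volume) < ⊤ :=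
    ENNReal.prod_lt_top fun j _ => (hLp j).eLpNorm_lt_top
  have hFnn : ∀ y : Fin (n + 2) → ℝ, 0 ≤ ∏ j, f j (fun i => y (j.succAbove i)) :=
    fun y => Finset.prod_nonneg fun j _ => hpos j _
  have hFmeas : Measurable fun y : Fin (n + 2) → ℝ => ∏ j, f j (fun i => y (j.succAbove i)) :=
    Finset.measurable_prod _ fun j _ =>
      (hmeas j).comp (measurable_pi_lambda _ fun i => measurable_pi_apply _)
  have hlint : (∫⁻ y : Fin (n + 2) → ℝ,
      ENNReal.ofReal (∏ j, f j (fun i => y (j.succAbove i)))) ≤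
      ∏ j, eLpNorm (f j) ((n + 1 : ℕ) : ℝ≥0∞) volume := by
    calc (∫⁻ y : Fin (n + 2) → ℝ, ENNReal.ofReal (∏ j, f j (fun i => y (j.succAbove i))))
        = ∫⁻ y : Fin (n + 2) → ℝ, ∏ j, g j (fun i => y (j.succAbove i)) :=
          lintegral_congr hofReal
      _ ≤ _ := hlw
  have hint : Integrable (fun y : Fin (n + 2) → ℝ =>
      ∏ j, f j (fun i => y (j.succAbove i))) volume := by
    refine ⟨hFmeas.aestronglyMeasurable, ?_⟩
    rw [hasFiniteIntegral_iff_ofReal (Filter.Eventually.of_forall hFnn)]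
    exact lt_of_le_of_lt hlint hfin
  refine ⟨hint, ?_⟩
  rw [integral_eq_lintegral_of_nonneg_ae (Filter.Eventually.of_forall hFnn)
    hFmeas.aestronglyMeasurable]
  rw [← ENNReal.toReal_prod]
  exact ENNReal.toReal_mono hfin.ne hlint
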